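/- Consider the DMMF process and let R, U, V ⊆ {1,...,n} be pairwise disjoint sets with R and U nonempty (V may be empty). Define f[t] = Σ_{j∈R} W_j[t] / Σ_{j∈R} α_j − Σ_{j∈U} W_j[t] / Σ_{j∈U} α_j. Then for every round t, on the event that W_j[t]/α_j > W_i[t]/α_i for all j ∈ V and all i ∈ R, one has E[f[t+1] − f[t] | F_t] ≥ (1 − ∏_{k∈R}(1−p_k)) / (Σ_{j∈R} α_j) · ∏_{k∉R∪V}(1−p_k) − (1 − ∏_{k∈U}(1−p_k)) / (Σ_{j∈U} α_j). -/

import Mathlib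

open MeasureTheory ProbabilityTheory Filter

/-- Winner predicate: given fair shares `α`, previous win counts `Wprev`, and the requests `r`
in the current round, agent `i` wins iff it requests and beats (in normalized win count,
ties broken by smallest index) every other requesting agent. -/
def winsAt {n : ℕ} (α : Fin n → ℝ) (Wprev : Fin n → ℕ) (r : Fin n → Bool) (i : Fin n) : Prop :=
  r i = true ∧ ∀ j : Fin n, r j = true →
    ((Wprev i : ℝ) / α i < (Wprev j : ℝ) / α j ∨
      ((Wprev i : ℝ) / α i = (Wprev j : ℝ) / α j ∧ i ≤ j))

open Classical in
/-- `W α r t i` : number of rounds, among the first `t` rounds, won by agent `i` under the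
DMMF allocation rule, when the (sample-path) requests are given by `r` (`r t i = true` means
agent `i` requests in round `t+1`). -/
noncomputable def W {n : ℕ} (α : Fin n → ℝ) (r : ℕ → Fin n → Bool) : ℕ → Fin n → ℕ
  | 0, _ => 0
  | t + 1, i => W α r t i + (if winsAt α (W α r t) (r t) i then 1 else 0)

/-- The subgroup stability criterion for the set `S`. -/
def StabCrit {n : ℕ} (α p : Fin n → ℝ) (S : Finset (Fin n)) : Prop :=
  ∀ R ⊆ S, R.Nonempty →
    (1 - ∏ k ∈ S, (1 - p k)) / (∑ k ∈ S, α k) ≤ (1 - ∏ k ∈ R, (1 - p k)) / (∑ k ∈ R, α k)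

/-- The strict subgroup stability criterion for the set `S`. -/
def StabCritStrict {n : ℕ} (α p : Fin n → ℝ) (S : Finset (Fin n)) : Prop :=
  StabCrit α p S ∧ ∀ R ⊂ S, R.Nonempty →
    (1 - ∏ k ∈ S, (1 - p k)) / (∑ k ∈ S, α k) < (1 - ∏ k ∈ R, (1 - p k)) / (∑ k ∈ R, α k)

/-- The hypotheses of the DMMF process: the requests `req t i` (request of agent `i` in
round `t+1`) are independent across agents and rounds, with `req t i` Bernoulli of
parameter `p i`; the fair shares `α i` are positive and sum to `1`. -/
structure IsDMMF {Ω : Type*} [MeasurableSpace Ω] (μ : Measure Ω) {n : ℕ}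
    (α p : Fin n → ℝ) (req : ℕ → Fin n → Ω → Bool) : Prop where
  isProb : IsProbabilityMeasure μ
  α_pos : ∀ i, 0 < α i
  α_sum : ∑ i, α i = 1
  p_mem : ∀ i, p i ∈ Set.Icc (0 : ℝ) 1
  meas : ∀ t i, Measurable (req t i)
  indep : iIndepFun
    (fun ti : ℕ × Fin n => req ti.1 ti.2) μ
  law : ∀ t i, μ {ω | req t i ω = true} = ENNReal.ofReal (p i)

/-- The natural filtration of the DMMF process: `natFilt req t` is the σ-algebra generated
by the requests of rounds `1, …, t` (i.e. by `req s` for `s < t`). -/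
def natFilt {Ω : Type*} [MeasurableSpace Ω] {n : ℕ}
    (req : ℕ → Fin n → Ω → Bool) (t : ℕ) : MeasurableSpace Ω :=
  ⨆ (s : ℕ) (_ : s < t) (i : Fin n),
    MeasurableSpace.comap (fun ω => req s i ω) (⊤ : MeasurableSpace Bool)

set_option linter.unusedSectionVars false

namespace DMMFProof


variable {n : ℕ}

lemma winsAt_unique (α : Fin n → ℝ) (y : Fin n → ℕ) (z : Fin n → Bool) {i j : Fin n}
    (hi : winsAt α y z i) (hj : winsAt α y z j) : i = j := by
  obtain ⟨hzi, hi'⟩ := hi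
  obtain ⟨hzj, hj'⟩ := hj
  rcases hi' j hzj with h1 | h1 <;> rcases hj' i hzi with h2 | h2
  · exact absurd h2 (not_lt.mpr h1.le)
  · exact absurd h1 (not_lt.mpr h2.1.le)
  · exact absurd h2 (not_lt.mpr h1.1.le)
  · exact le_antisymm h1.2 h2.2

lemma exists_winsAt (α : Fin n → ℝ) (y : Fin n → ℕ) (z : Fin n → Bool)
    (R V : Finset (Fin n))
    (hV : ∀ j ∈ V, ∀ i ∈ R, (y i : ℝ) / α i < (y j : ℝ) / α j)
    (hout : ∀ k ∈ Finset.univ \ (R ∪ V), z k = false)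
    (hex : ∃ k ∈ R, z k = true) : ∃ j ∈ R, winsAt α y z j := by
  classical
  obtain ⟨k0, hk0R, hk0z⟩ := hex
  set S : Finset (Fin n) := R.filter (fun k => z k = true) with hS
  have hSne : S.Nonempty := ⟨k0, by simp [hS, hk0R, hk0z]⟩
  set m := S.inf' hSne (fun k => (y k : ℝ) / α k) with hm
  set S' := S.filter (fun k => (y k : ℝ) / α k = m) with hS'
  have hS'ne : S'.Nonempty := by
    obtain ⟨k, hk, hkm⟩ := Finset.exists_mem_eq_inf' hSne (fun k => (y k : ℝ) / α k)
    exact ⟨k, by simp only [hS', Finset.mem_filter]; exact ⟨hk, hkm.symm⟩⟩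
  set j := S'.min' hS'ne with hj
  have hjS' : j ∈ S' := Finset.min'_mem _ _
  have hjS : j ∈ S := (Finset.mem_filter.mp hjS').1
  have hjR : j ∈ R := (Finset.mem_filter.mp hjS).1
  have hjz : z j = true := (Finset.mem_filter.mp hjS).2
  have hjm : (y j : ℝ) / α j = m := (Finset.mem_filter.mp hjS').2
  refine ⟨j, hjR, hjz, fun k hkz => ?_⟩
  by_cases hkR : k ∈ R
  · have hkS : k ∈ S := Finset.mem_filter.mpr ⟨hkR, hkz⟩
    have hle : m ≤ (y k : ℝ) / α k := Finset.inf'_le _ hkS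
    rcases lt_or_eq_of_le hle with hlt | heq
    · exact Or.inl (by rw [hjm]; exact hlt)
    · exact Or.inr ⟨by rw [hjm, ← heq],
        Finset.min'_le _ _ (Finset.mem_filter.mpr ⟨hkS, heq.symm⟩)⟩
  · by_cases hkV : k ∈ V
    · exact Or.inl (hV k hkV j hjR)
    · exact absurd hkz (by simp [hout k (by simp [hkR, hkV])])

open Classical in
lemma sum_winsAt_le_one (α : Fin n → ℝ) (y : Fin n → ℕ) (z : Fin n → Bool) (U : Finset (Fin n)) :
    (∑ j ∈ U, if winsAt α y z j then (1:ℝ) else 0)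
      ≤ if ∃ k ∈ U, z k = true then 1 else 0 := by
  classical
  by_cases hEU : ∃ k ∈ U, z k = true
  · rw [if_pos hEU, Finset.sum_boole]
    have hcard : (U.filter (fun j => winsAt α y z j)).card ≤ 1 := by
      refine Finset.card_le_one.mpr fun a ha b hb => ?_
      exact winsAt_unique α y z (Finset.mem_filter.mp ha).2 (Finset.mem_filter.mp hb).2
    exact_mod_cast hcard
  · rw [if_neg hEU]
    refine le_of_eq (Finset.sum_eq_zero fun j hj => ?_)
    rw [if_neg]
    exact fun hw => hEU ⟨j, hj, hw.1⟩

open Classical in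
lemma one_le_sum_winsAt (α : Fin n → ℝ) (y : Fin n → ℕ) (z : Fin n → Bool) {R : Finset (Fin n)}
    (hwin : ∃ j ∈ R, winsAt α y z j) :
    (1:ℝ) ≤ ∑ j ∈ R, if winsAt α y z j then (1:ℝ) else 0 := by
  classical
  obtain ⟨j, hjR, hj⟩ := hwin
  calc (1:ℝ) = if winsAt α y z j then (1:ℝ) else 0 := by rw [if_pos hj]
    _ ≤ _ := Finset.single_le_sum (f := fun j => if winsAt α y z j then (1:ℝ) else 0)
        (fun i _ => by split <;> norm_num) hjR

open Classical in
lemma sum_winsAt_nonneg (α : Fin n → ℝ) (y : Fin n → ℕ) (z : Fin n → Bool) (R : Finset (Fin n)) :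
    (0:ℝ) ≤ ∑ j ∈ R, if winsAt α y z j then (1:ℝ) else 0 :=
  Finset.sum_nonneg fun i _ => by split <;> norm_num



variable {Ω : Type*} [MeasurableSpace Ω] {μ : Measure Ω}
  {α p : Fin n → ℝ} {req : ℕ → Fin n → Ω → Bool}

lemma measurableSet_allFalse (h : IsDMMF μ α p req) (t : ℕ) (S : Finset (Fin n)) :
    MeasurableSet {ω | ∀ k ∈ S, req t k ω = false} := by
  have : {ω | ∀ k ∈ S, req t k ω = false}
      = ⋂ k ∈ (S : Set (Fin n)), (fun ω => req t k ω) ⁻¹' {false} := by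
    ext ω; simp
  rw [this]
  exact MeasurableSet.biInter S.countable_toSet fun k _ => (h.meas t k) trivial

lemma meas_allFalse (h : IsDMMF μ α p req) (t : ℕ) (S : Finset (Fin n)) :
    μ {ω | ∀ k ∈ S, req t k ω = false} = ENNReal.ofReal (∏ k ∈ S, (1 - p k)) := by
  classical
  haveI := h.isProb
  have hsingle : ∀ k : Fin n, μ {ω | req t k ω = false} = ENNReal.ofReal (1 - p k) := by
    intro k
    have hc : {ω | req t k ω = false} = {ω | req t k ω = true}ᶜ := by
      ext ω; simp
    have hms : MeasurableSet {ω | req t k ω = true} :=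
      (h.meas t k) (show MeasurableSet ({true} : Set Bool) from trivial)
    rw [hc, measure_compl hms (measure_ne_top μ _), h.law t k,
      measure_univ, ENNReal.ofReal_sub 1 (h.p_mem k).1, ENNReal.ofReal_one]
  have key := h.indep.meas_biInter (S := S.image (fun k => ((t, k) : ℕ × Fin n)))
    (s := fun ti => {ω | req ti.1 ti.2 ω = false})
    (fun ti _ => ⟨{false}, trivial, rfl⟩)
  have hset : (⋂ ti ∈ S.image (fun k => ((t, k) : ℕ × Fin n)), {ω | req ti.1 ti.2 ω = false})
      = {ω | ∀ k ∈ S, req t k ω = false} := by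
    ext ω
    simp only [Set.mem_iInter, Finset.mem_image, Set.mem_setOf_eq]
    constructor
    · intro H k hk
      exact H (t, k) ⟨k, hk, rfl⟩
    · rintro H ti ⟨k, hk, rfl⟩
      exact H k hk
  have hprod : (∏ ti ∈ S.image (fun k => ((t, k) : ℕ × Fin n)), μ {ω | req ti.1 ti.2 ω = false})
      = ∏ k ∈ S, μ {ω | req t k ω = false} := by
    rw [Finset.prod_image]
    intro a _ b _ hab
    exact (Prod.ext_iff.mp hab).2
  rw [hset, hprod] at key
  rw [key, ENNReal.ofReal_prod_of_nonneg (fun i _ => by linarith [(h.p_mem i).2])]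
  exact Finset.prod_congr rfl fun k _ => hsingle k

lemma natFilt_le (h : IsDMMF μ α p req) (t : ℕ) : natFilt req t ≤ ‹MeasurableSpace Ω› := by
  unfold natFilt
  exact iSup_le fun s => iSup_le fun _ => iSup_le fun i => (h.meas s i).comap_le

lemma comap_le_natFilt {s t : ℕ} (hst : s < t) (i : Fin n) :
    MeasurableSpace.comap (fun ω => req s i ω) ⊤ ≤ natFilt req t :=
  calc MeasurableSpace.comap (fun ω => req s i ω) ⊤
      ≤ ⨆ i : Fin n, MeasurableSpace.comap (fun ω => req s i ω) ⊤ :=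
        le_iSup (fun i : Fin n => MeasurableSpace.comap (fun ω => req s i ω)
          (⊤ : MeasurableSpace Bool)) i
    _ ≤ ⨆ (_ : s < t), ⨆ i : Fin n, MeasurableSpace.comap (fun ω => req s i ω) ⊤ :=
        le_iSup (fun _ : s < t => _) hst
    _ ≤ natFilt req t := le_iSup
        (fun s => ⨆ (_ : s < t), ⨆ i : Fin n, MeasurableSpace.comap (fun ω => req s i ω) ⊤) s

lemma natFilt_mono {t t' : ℕ} (htt' : t ≤ t') : (natFilt req t : MeasurableSpace Ω) ≤ natFilt req t' := by
  unfold natFilt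
  exact iSup_le fun s => iSup_le fun hs => iSup_le fun i =>
    comap_le_natFilt (lt_of_lt_of_le hs htt') i

lemma indep_natFilt (h : IsDMMF μ α p req) (t : ℕ) :
    Indep (⨆ i : Fin n, MeasurableSpace.comap (fun ω => req t i ω) ⊤) (natFilt req t) μ := by
  have hdisj : Disjoint {ti : ℕ × Fin n | ti.1 = t} {ti : ℕ × Fin n | ti.1 < t} := by
    rw [Set.disjoint_left]
    rintro ⟨s, i⟩ h1 h2
    exact absurd h2 (by simp_all)
  have hbig := indep_iSup_of_disjoint
    (m := fun ti : ℕ × Fin n => MeasurableSpace.comap (fun ω => req ti.1 ti.2 ω) ⊤)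
    (fun ti => (h.meas ti.1 ti.2).comap_le) h.indep.iIndep hdisj
  refine indep_of_indep_of_le_left (indep_of_indep_of_le_right hbig ?_) ?_
  · unfold natFilt
    exact iSup_le fun s => iSup_le fun hs => iSup_le fun i =>
      le_iSup₂ (f := fun (ti : ℕ × Fin n) (_ : ti ∈ {ti : ℕ × Fin n | ti.1 < t}) =>
        MeasurableSpace.comap (fun ω => req ti.1 ti.2 ω) ⊤) (s, i) hs
  · exact iSup_le fun i =>
      le_iSup₂ (f := fun (ti : ℕ × Fin n) (_ : ti ∈ {ti : ℕ × Fin n | ti.1 = t}) =>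
        MeasurableSpace.comap (fun ω => req ti.1 ti.2 ω) ⊤) (t, i) rfl

lemma measurable_req_vec (t : ℕ) :
    Measurable[⨆ i : Fin n, MeasurableSpace.comap (fun ω => req t i ω) ⊤]
      (fun ω (i : Fin n) => req t i ω) :=
  @measurable_pi_lambda Ω (Fin n) (fun _ => Bool)
    (⨆ i : Fin n, MeasurableSpace.comap (fun ω => req t i ω) ⊤) _ _
    (fun i => Measurable.of_comap_le
      (le_iSup (fun i : Fin n => MeasurableSpace.comap (fun ω => req t i ω)
        (⊤ : MeasurableSpace Bool)) i))

open Classical in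
lemma measurable_W (t : ℕ) :
    Measurable[natFilt req t] (fun ω => W α (fun s k => req s k ω) t) := by
  induction t with
  | zero =>
      have h0 : (fun ω => W α (fun s k => req s k ω) 0) = (fun _ => fun _ => (0:ℕ)) := by
        funext ω i; simp [W]
      rw [h0]; exact measurable_const
  | succ t ih =>
      have hstep : (fun ω => W α (fun s k => req s k ω) (t+1))
          = (fun q : (Fin n → ℕ) × (Fin n → Bool) =>
              fun i => q.1 i + if winsAt α q.1 q.2 i then 1 else 0)
            ∘ (fun ω => (W α (fun s k => req s k ω) t, fun i => req t i ω)) := by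
        funext ω; funext i; simp [W]
      rw [hstep]
      refine Measurable.comp (measurable_of_countable _) (Measurable.prod ?_ ?_)
      · exact ih.mono (natFilt_mono (Nat.le_succ t)) le_rfl
      · exact (measurable_req_vec t).mono
          (iSup_le fun i => comap_le_natFilt (Nat.lt_succ_self t) i) le_rfl


end DMMFProof


open Classical in
theorem DMMFProof.main
    {Ω : Type*} [MeasurableSpace Ω] (μ : Measure Ω) {n : ℕ}
    (α p : Fin n → ℝ) (req : ℕ → Fin n → Ω → Bool) (h : IsDMMF μ α p req)
    (R U V : Finset (Fin n)) (hR : R.Nonempty) (hU : U.Nonempty)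
    (hRU : Disjoint R U) (hRV : Disjoint R V) (hUV : Disjoint U V) (t : ℕ) :
    ∀ᵐ ω ∂μ,
      (∀ j ∈ V, ∀ i ∈ R,
        (W α (fun s k => req s k ω) t i : ℝ) / α i
          < (W α (fun s k => req s k ω) t j : ℝ) / α j) →
      (1 - ∏ k ∈ R, (1 - p k)) / (∑ j ∈ R, α j) * ∏ k ∈ Finset.univ \ (R ∪ V), (1 - p k)
        - (1 - ∏ k ∈ U, (1 - p k)) / (∑ j ∈ U, α j)
      ≤ (μ[(fun ω' =>
            ((∑ j ∈ R, (W α (fun s k => req s k ω') (t + 1) j : ℝ)) / (∑ j ∈ R, α j)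
              - (∑ j ∈ U, (W α (fun s k => req s k ω') (t + 1) j : ℝ)) / (∑ j ∈ U, α j))
            - ((∑ j ∈ R, (W α (fun s k => req s k ω') t j : ℝ)) / (∑ j ∈ R, α j)
              - (∑ j ∈ U, (W α (fun s k => req s k ω') t j : ℝ)) / (∑ j ∈ U, α j)))
          | natFilt req t]) ω := by
  haveI := h.isProb
  have hαR : (0:ℝ) < ∑ j ∈ R, α j := Finset.sum_pos (fun i _ => h.α_pos i) hR
  have hαU : (0:ℝ) < ∑ j ∈ U, α j := Finset.sum_pos (fun i _ => h.α_pos i) hU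
  have hm : natFilt req t ≤ ‹MeasurableSpace Ω› := DMMFProof.natFilt_le h t
  haveI : SigmaFinite (μ.trim hm) := inferInstance
  have hmt : (⨆ i : Fin n, MeasurableSpace.comap (fun ω => req t i ω) ⊤)
      ≤ ‹MeasurableSpace Ω› := iSup_le fun i => (h.meas t i).comap_le
  have hIndep := DMMFProof.indep_natFilt h t
  set Y : Ω → (Fin n → ℕ) := fun ω => W α (fun s k => req s k ω) t with hY_def
  have hYmeas : Measurable[natFilt req t] Y := DMMFProof.measurable_W t
  set A : Set Ω := {ω | ∀ j ∈ V, ∀ i ∈ R, (Y ω i : ℝ) / α i < (Y ω j : ℝ) / α j} with hA_def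
  have hAm : MeasurableSet[natFilt req t] A := by
    have hAeq : A = Y ⁻¹' {y | ∀ j ∈ V, ∀ i ∈ R, (y i : ℝ) / α i < (y j : ℝ) / α j} := rfl
    rw [hAeq]; exact hYmeas MeasurableSet.of_discrete
  set g : Ω → ℝ := (fun ω' =>
            ((∑ j ∈ R, (W α (fun s k => req s k ω') (t + 1) j : ℝ)) / (∑ j ∈ R, α j)
              - (∑ j ∈ U, (W α (fun s k => req s k ω') (t + 1) j : ℝ)) / (∑ j ∈ U, α j))
            - ((∑ j ∈ R, (W α (fun s k => req s k ω') t j : ℝ)) / (∑ j ∈ R, α j)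
              - (∑ j ∈ U, (W α (fun s k => req s k ω') t j : ℝ)) / (∑ j ∈ U, α j))) with hg_def
  set gR : Ω → ℝ := fun ω =>
    (if (∃ k ∈ R, req t k ω = true) ∧ (∀ k ∈ Finset.univ \ (R ∪ V), req t k ω = false)
      then (1:ℝ) else 0) / (∑ j ∈ R, α j) with hgR_def
  set gU : Ω → ℝ := fun ω =>
    (if ∃ k ∈ U, req t k ω = true then (1:ℝ) else 0) / (∑ j ∈ U, α j) with hgU_def
  set G : Ω → ℝ := fun ω => A.indicator gR ω - gU ω with hG_def
  -- pathwise formula for g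
  have hgeq : ∀ ω, g ω
      = (∑ j ∈ R, if winsAt α (Y ω) (fun k => req t k ω) j then (1:ℝ) else 0) / (∑ j ∈ R, α j)
        - (∑ j ∈ U, if winsAt α (Y ω) (fun k => req t k ω) j then (1:ℝ) else 0) / (∑ j ∈ U, α j) := by
    intro ω
    have hW1 : ∀ j : Fin n, W α (fun s k => req s k ω) (t + 1) j
        = Y ω j + (if winsAt α (Y ω) (fun k => req t k ω) j then 1 else 0) := fun j => rfl
    simp only [hg_def, hW1, hY_def]
    push_cast [apply_ite (Nat.cast : ℕ → ℝ)]
    rw [Finset.sum_add_distrib, Finset.sum_add_distrib]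
    ring
  -- pointwise bound G ≤ g
  have hpt : ∀ ω, G ω ≤ g ω := by
    intro ω
    rw [hgeq ω]
    have hU_le : (∑ j ∈ U, if winsAt α (Y ω) (fun k => req t k ω) j then (1:ℝ) else 0)
        / (∑ j ∈ U, α j) ≤ gU ω :=
      (div_le_div_iff_of_pos_right hαU).mpr (DMMFProof.sum_winsAt_le_one α (Y ω) _ U)
    have hRnn : (0:ℝ) ≤ (∑ j ∈ R, if winsAt α (Y ω) (fun k => req t k ω) j then (1:ℝ) else 0)
        / (∑ j ∈ R, α j) := div_nonneg (DMMFProof.sum_winsAt_nonneg α _ _ R) hαR.le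
    simp only [hG_def]
    by_cases hA2 : ω ∈ A
    · have hgRle : gR ω ≤ (∑ j ∈ R, if winsAt α (Y ω) (fun k => req t k ω) j then (1:ℝ) else 0)
          / (∑ j ∈ R, α j) := by
        simp only [hgR_def]
        by_cases hER : (∃ k ∈ R, req t k ω = true)
            ∧ (∀ k ∈ Finset.univ \ (R ∪ V), req t k ω = false)
        · rw [if_pos hER]
          exact (div_le_div_iff_of_pos_right hαR).mpr (DMMFProof.one_le_sum_winsAt α (Y ω) _
            (DMMFProof.exists_winsAt α (Y ω) (fun k => req t k ω) R V hA2 hER.2 hER.1))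
        · rw [if_neg hER, zero_div]; exact hRnn
      rw [Set.indicator_of_mem hA2]
      linarith [hU_le, hgRle]
    · rw [Set.indicator_of_notMem hA2]
      linarith [hRnn, hU_le]
  -- measurability and integrability
  have hr0mt : Measurable[⨆ i : Fin n, MeasurableSpace.comap (fun ω => req t i ω) ⊤]
      (fun ω (i : Fin n) => req t i ω) := DMMFProof.measurable_req_vec t
  have hgRmt : Measurable[⨆ i : Fin n, MeasurableSpace.comap (fun ω => req t i ω) ⊤] gR := by
    have hco : gR = (fun z : Fin n → Bool =>
        (if (∃ k ∈ R, z k = true) ∧ (∀ k ∈ Finset.univ \ (R ∪ V), z k = false)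
          then (1:ℝ) else 0) / (∑ j ∈ R, α j)) ∘ (fun ω (i : Fin n) => req t i ω) := rfl
    rw [hco]; exact (measurable_of_countable _).comp hr0mt
  have hgUmt : Measurable[⨆ i : Fin n, MeasurableSpace.comap (fun ω => req t i ω) ⊤] gU := by
    have hco : gU = (fun z : Fin n → Bool =>
        (if ∃ k ∈ U, z k = true then (1:ℝ) else 0) / (∑ j ∈ U, α j))
          ∘ (fun ω (i : Fin n) => req t i ω) := rfl
    rw [hco]; exact (measurable_of_countable _).comp hr0mt
  have hgR_int : Integrable gR μ := by
    refine (integrable_const ((1:ℝ) / (∑ j ∈ R, α j))).mono'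
      ((hgRmt.mono hmt le_rfl)).aestronglyMeasurable (Filter.Eventually.of_forall fun ω => ?_)
    simp only [hgR_def, Real.norm_eq_abs]
    rw [abs_div, abs_of_pos hαR]
    exact (div_le_div_iff_of_pos_right hαR).mpr (by split <;> simp)
  have hgU_int : Integrable gU μ := by
    refine (integrable_const ((1:ℝ) / (∑ j ∈ U, α j))).mono'
      ((hgUmt.mono hmt le_rfl)).aestronglyMeasurable (Filter.Eventually.of_forall fun ω => ?_)
    simp only [hgU_def, Real.norm_eq_abs]
    rw [abs_div, abs_of_pos hαU]
    exact (div_le_div_iff_of_pos_right hαU).mpr (by split <;> simp)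
  have hsum_meas : ∀ (t' : ℕ) (S : Finset (Fin n)),
      Measurable (fun ω => ∑ j ∈ S, (W α (fun s k => req s k ω) t' j : ℝ)) := by
    intro t' S
    have hmW : Measurable (fun ω => W α (fun s k => req s k ω) t') :=
      (DMMFProof.measurable_W t').mono (DMMFProof.natFilt_le h t') le_rfl
    exact Finset.measurable_sum S fun j _ =>
      (measurable_of_countable (fun y : Fin n → ℕ => (y j : ℝ))).comp hmW
  have hg_meas : Measurable g := by
    rw [hg_def]
    exact (((hsum_meas (t+1) R).div_const _).sub ((hsum_meas (t+1) U).div_const _)).sub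
      (((hsum_meas t R).div_const _).sub ((hsum_meas t U).div_const _))
  have hg_int : Integrable g μ := by
    refine (integrable_const ((R.card : ℝ) / (∑ j ∈ R, α j)
        + (U.card : ℝ) / (∑ j ∈ U, α j))).mono'
      hg_meas.aestronglyMeasurable (Filter.Eventually.of_forall fun ω => ?_)
    rw [hgeq ω, Real.norm_eq_abs]
    have habs : ∀ (S : Finset (Fin n)),
        |∑ j ∈ S, if winsAt α (Y ω) (fun k => req t k ω) j then (1:ℝ) else 0| ≤ (S.card : ℝ) := by
      intro S
      rw [abs_of_nonneg (DMMFProof.sum_winsAt_nonneg α _ _ S)]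
      calc (∑ j ∈ S, if winsAt α (Y ω) (fun k => req t k ω) j then (1:ℝ) else 0)
          ≤ ∑ _j ∈ S, (1:ℝ) := Finset.sum_le_sum fun i _ => by split <;> norm_num
        _ = (S.card : ℝ) := by simp
    have hb1 : |(∑ j ∈ R, if winsAt α (Y ω) (fun k => req t k ω) j then (1:ℝ) else 0)
        / (∑ j ∈ R, α j)| ≤ (R.card : ℝ) / (∑ j ∈ R, α j) := by
      rw [abs_div, abs_of_pos hαR]
      exact (div_le_div_iff_of_pos_right hαR).mpr (habs R)
    have hb2 : |(∑ j ∈ U, if winsAt α (Y ω) (fun k => req t k ω) j then (1:ℝ) else 0)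
        / (∑ j ∈ U, α j)| ≤ (U.card : ℝ) / (∑ j ∈ U, α j) := by
      rw [abs_div, abs_of_pos hαU]
      exact (div_le_div_iff_of_pos_right hαU).mpr (habs U)
    exact le_trans (abs_sub _ _) (add_le_add hb1 hb2)
  have hAind_int : Integrable (A.indicator gR) μ := hgR_int.indicator (hm A hAm)
  have hG_int : Integrable G μ := by
    have : G = A.indicator gR - gU := rfl
    rw [this]; exact hAind_int.sub hgU_int
  -- conditional expectation facts
  have hmono : μ[G|natFilt req t] ≤ᵐ[μ] μ[g|natFilt req t] :=
    condExp_mono hG_int hg_int (Filter.Eventually.of_forall hpt)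
  have hsub : μ[G|natFilt req t]
      =ᵐ[μ] μ[A.indicator gR|natFilt req t] - μ[gU|natFilt req t] := by
    have hGdefeq : G = A.indicator gR - gU := rfl
    rw [hGdefeq]
    exact condExp_sub hAind_int hgU_int _
  have hind : μ[A.indicator gR|natFilt req t] =ᵐ[μ] A.indicator (μ[gR|natFilt req t]) :=
    condExp_indicator hgR_int hAm
  have hconstR : μ[gR|natFilt req t] =ᵐ[μ] fun _ => ∫ ω, gR ω ∂μ :=
    condExp_indep_eq hmt hm (hgRmt.stronglyMeasurable) hIndep
  have hconstU : μ[gU|natFilt req t] =ᵐ[μ] fun _ => ∫ ω, gU ω ∂μ :=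
    condExp_indep_eq hmt hm (hgUmt.stronglyMeasurable) hIndep
  -- probabilities
  have hpnn : ∀ (S : Finset (Fin n)), 0 ≤ ∏ k ∈ S, (1 - p k) :=
    fun S => Finset.prod_nonneg fun k _ => by linarith [(h.p_mem k).2]
  have hple1 : ∀ (S : Finset (Fin n)), ∏ k ∈ S, (1 - p k) ≤ 1 :=
    fun S => Finset.prod_le_one (fun k _ => by linarith [(h.p_mem k).2])
      (fun k _ => by linarith [(h.p_mem k).1])
  have hERset_eq : {ω | (∃ k ∈ R, req t k ω = true)
        ∧ (∀ k ∈ Finset.univ \ (R ∪ V), req t k ω = false)}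
      = {ω | ∀ k ∈ Finset.univ \ (R ∪ V), req t k ω = false}
        \ {ω | ∀ k ∈ Finset.univ \ V, req t k ω = false} := by
    ext ω
    simp only [Set.mem_setOf_eq, Set.mem_diff]
    constructor
    · rintro ⟨⟨k, hkR, hkz⟩, hout⟩
      refine ⟨hout, fun hall => ?_⟩
      have hkmem : k ∈ Finset.univ \ V := by
        simp only [Finset.mem_sdiff, Finset.mem_univ, true_and]
        exact Finset.disjoint_left.mp hRV hkR
      exact absurd (hall k hkmem) (by simp [hkz])
    · rintro ⟨hout, hnall⟩
      refine ⟨?_, hout⟩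
      push_neg at hnall
      obtain ⟨k, hk, hkz⟩ := hnall
      have hkz' : req t k ω = true := by simpa using hkz
      by_cases hkR : k ∈ R
      · exact ⟨k, hkR, hkz'⟩
      · exfalso
        have hkmem : k ∈ Finset.univ \ (R ∪ V) := by
          simp only [Finset.mem_sdiff, Finset.mem_univ, true_and, Finset.mem_union] at hk ⊢
          exact fun hc => hc.elim hkR hk
        exact absurd (hout k hkmem) (by simp [hkz'])
  have hsubset : {ω | ∀ k ∈ Finset.univ \ V, req t k ω = false}
      ⊆ {ω | ∀ k ∈ Finset.univ \ (R ∪ V), req t k ω = false} := by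
    intro ω hω k hk
    refine hω k ?_
    simp only [Finset.mem_sdiff, Finset.mem_univ, true_and, Finset.mem_union] at hk ⊢
    exact fun hkV => hk (Or.inr hkV)
  have hprod_split : (∏ k ∈ Finset.univ \ V, (1 - p k))
      = (∏ k ∈ R, (1 - p k)) * ∏ k ∈ Finset.univ \ (R ∪ V), (1 - p k) := by
    have hset_union : Finset.univ \ V = R ∪ (Finset.univ \ (R ∪ V)) := by
      ext k
      simp only [Finset.mem_union, Finset.mem_sdiff, Finset.mem_univ, true_and]
      constructor
      · intro hkV
        by_cases hkR : k ∈ R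
        · exact Or.inl hkR
        · exact Or.inr fun hc => hc.elim hkR hkV
      · rintro (hkR | hk)
        · exact Finset.disjoint_left.mp hRV hkR
        · exact fun hkV => hk (Or.inr hkV)
    rw [hset_union, Finset.prod_union (by
      rw [Finset.disjoint_left]
      intro a haR ha
      simp only [Finset.mem_sdiff, Finset.mem_univ, true_and, Finset.mem_union] at ha
      exact ha (Or.inl haR))]
  have hERmeas : MeasurableSet {ω | (∃ k ∈ R, req t k ω = true)
      ∧ (∀ k ∈ Finset.univ \ (R ∪ V), req t k ω = false)} := by
    rw [hERset_eq]
    exact (DMMFProof.measurableSet_allFalse h t _).diff (DMMFProof.measurableSet_allFalse h t _)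
  have hμER : μ {ω | (∃ k ∈ R, req t k ω = true)
      ∧ (∀ k ∈ Finset.univ \ (R ∪ V), req t k ω = false)}
      = ENNReal.ofReal ((1 - ∏ k ∈ R, (1 - p k)) * ∏ k ∈ Finset.univ \ (R ∪ V), (1 - p k)) := by
    rw [hERset_eq, measure_diff hsubset
      (DMMFProof.measurableSet_allFalse h t _).nullMeasurableSet (measure_ne_top μ _),
      DMMFProof.meas_allFalse h t, DMMFProof.meas_allFalse h t,
      ← ENNReal.ofReal_sub _ (hpnn _), hprod_split]
    congr 1
    ring
  have hint_gR : ∫ ω, gR ω ∂μ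
      = ((1 - ∏ k ∈ R, (1 - p k)) * ∏ k ∈ Finset.univ \ (R ∪ V), (1 - p k))
        / (∑ j ∈ R, α j) := by
    have hco : gR = Set.indicator {ω | (∃ k ∈ R, req t k ω = true)
        ∧ (∀ k ∈ Finset.univ \ (R ∪ V), req t k ω = false)}
        (fun _ => (1:ℝ) / (∑ j ∈ R, α j)) := by
      funext ω
      simp only [hgR_def, Set.indicator_apply, Set.mem_setOf_eq]
      split_ifs <;> simp
    rw [hco, integral_indicator_const _ hERmeas, measureReal_def, hμER,
      ENNReal.toReal_ofReal (mul_nonneg (by linarith [hple1 R]) (hpnn _)), smul_eq_mul]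
    ring
  have hμEU : μ {ω | ∃ k ∈ U, req t k ω = true}
      = ENNReal.ofReal (1 - ∏ k ∈ U, (1 - p k)) := by
    have hcpl : {ω | ∃ k ∈ U, req t k ω = true}
        = {ω | ∀ k ∈ U, req t k ω = false}ᶜ := by
      ext ω
      simp only [Set.mem_setOf_eq, Set.mem_compl_iff]
      constructor
      · rintro ⟨k, hk, hkz⟩ hall
        rw [hall k hk] at hkz
        cases hkz
      · intro hna
        by_contra hc
        push_neg at hc
        exact hna fun k hk => by
          rcases Bool.eq_false_or_eq_true (req t k ω) with hb | hb
          · exact absurd hb (hc k hk)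
          · exact hb
    rw [hcpl, measure_compl (DMMFProof.measurableSet_allFalse h t _) (measure_ne_top μ _),
      measure_univ, DMMFProof.meas_allFalse h t,
      ← ENNReal.ofReal_one, ← ENNReal.ofReal_sub _ (hpnn _)]
  have hint_gU : ∫ ω, gU ω ∂μ = (1 - ∏ k ∈ U, (1 - p k)) / (∑ j ∈ U, α j) := by
    have hEUmeas : MeasurableSet {ω | ∃ k ∈ U, req t k ω = true} := by
      have : {ω | ∃ k ∈ U, req t k ω = true}
          = ⋃ k ∈ (U : Set (Fin n)), (fun ω => req t k ω) ⁻¹' {true} := by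
        ext ω; simp
      rw [this]
      exact MeasurableSet.biUnion U.countable_toSet fun k _ => (h.meas t k) trivial
    have hco : gU = Set.indicator {ω | ∃ k ∈ U, req t k ω = true}
        (fun _ => (1:ℝ) / (∑ j ∈ U, α j)) := by
      funext ω
      simp only [hgU_def, Set.indicator_apply, Set.mem_setOf_eq]
      split_ifs <;> simp
    rw [hco, integral_indicator_const _ hEUmeas, measureReal_def, hμEU,
      ENNReal.toReal_ofReal (by linarith [hple1 U]), smul_eq_mul]
    ring
  -- final assembly
  filter_upwards [hmono, hsub, hind, hconstR, hconstU] with ω h1 h2 h3 h4 h5 hVcond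
  have hAω : ω ∈ A := hVcond
  have e1 : (μ[G|natFilt req t]) ω
      = ((1 - ∏ k ∈ R, (1 - p k)) * ∏ k ∈ Finset.univ \ (R ∪ V), (1 - p k)) / (∑ j ∈ R, α j)
        - (1 - ∏ k ∈ U, (1 - p k)) / (∑ j ∈ U, α j) := by
    rw [h2, Pi.sub_apply, h3, Set.indicator_of_mem hAω, h4, h5, hint_gR, hint_gU]
  have := h1
  rw [e1] at this
  calc (1 - ∏ k ∈ R, (1 - p k)) / (∑ j ∈ R, α j) * ∏ k ∈ Finset.univ \ (R ∪ V), (1 - p k)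
        - (1 - ∏ k ∈ U, (1 - p k)) / (∑ j ∈ U, α j)
      = ((1 - ∏ k ∈ R, (1 - p k)) * ∏ k ∈ Finset.univ \ (R ∪ V), (1 - p k)) / (∑ j ∈ R, α j)
        - (1 - ∏ k ∈ U, (1 - p k)) / (∑ j ∈ U, α j) := by ring
    _ ≤ (μ[g|natFilt req t]) ω := this

/-- Drift of the difference in normalized win counts. For pairwise disjoint
sets `R, U, V` with `R, U` nonempty, let
`f t = Σ_{j∈R} W j t/Σ_{j∈R} α j − Σ_{j∈U} W j t/Σ_{j∈U} α j`. Then for every round `t`, on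
the event that `W j t/α j > W i t/α i` for all `j ∈ V`, `i ∈ R`, one has
`E[f (t+1) − f t | F_t] ≥ (1 − ∏_{k∈R}(1−p k))/Σ_{j∈R} α j · ∏_{k∉R∪V}(1−p k)
  − (1 − ∏_{k∈U}(1−p k))/Σ_{j∈U} α j`. -/
theorem dmmf_drift_of_win_difference
    {Ω : Type*} [MeasurableSpace Ω] (μ : Measure Ω) {n : ℕ}
    (α p : Fin n → ℝ) (req : ℕ → Fin n → Ω → Bool) (h : IsDMMF μ α p req)
    (R U V : Finset (Fin n)) (hR : R.Nonempty) (hU : U.Nonempty)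
    (hRU : Disjoint R U) (hRV : Disjoint R V) (hUV : Disjoint U V) (t : ℕ) :
    ∀ᵐ ω ∂μ,
      (∀ j ∈ V, ∀ i ∈ R,
        (W α (fun s k => req s k ω) t i : ℝ) / α i
          < (W α (fun s k => req s k ω) t j : ℝ) / α j) →
      (1 - ∏ k ∈ R, (1 - p k)) / (∑ j ∈ R, α j) * ∏ k ∈ Finset.univ \ (R ∪ V), (1 - p k)
        - (1 - ∏ k ∈ U, (1 - p k)) / (∑ j ∈ U, α j)
      ≤ (μ[(fun ω' =>
            ((∑ j ∈ R, (W α (fun s k => req s k ω') (t + 1) j : ℝ)) / (∑ j ∈ R, α j)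
              - (∑ j ∈ U, (W α (fun s k => req s k ω') (t + 1) j : ℝ)) / (∑ j ∈ U, α j))
            - ((∑ j ∈ R, (W α (fun s k => req s k ω') t j : ℝ)) / (∑ j ∈ R, α j)
              - (∑ j ∈ U, (W α (fun s k => req s k ω') t j : ℝ)) / (∑ j ∈ U, α j)))
          | natFilt req t]) ω :=
  DMMFProof.main μ α p req h R U V hR hU hRU hRV hUV t
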